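/- For every 312-avoiding TITO ≼, the set of 312-avoiding real TITOs μ with Inv(μ) ⊆ Inv(≼) has a greatest element with respect to the Dyer order: there is a 312-avoiding real TITO μ₀ with Inv(μ₀) ⊆ Inv(≼) such that Inv(μ) ⊆ Inv(μ₀) for every 312-avoiding real TITO μ with Inv(μ) ⊆ Inv(≼). -/

import Mathlib

structure TITO (n : ℕ) where
  rel : ℤ → ℤ → Prop
  refl : ∀ a, rel a a
  antisymm : ∀ a b, rel a b → rel b a → a = b
  trans : ∀ a b c, rel a b → rel b c → rel a c
  total : ∀ a b, rel a b ∨ rel b a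
  invariant : ∀ a b, rel a b ↔ rel (a + n) (b + n)

namespace TITO

variable {n : ℕ}

/-- The inversion set of a TITO. -/
def Inversions (t : TITO n) : Set (ℤ × ℤ) := {p | p.1 < p.2 ∧ t.rel p.2 p.1}

/-- A TITO is 312-avoiding if there are no integers `a < b < c` with `c ≼ a` and `a ≼ b`. -/
def Avoids312 (t : TITO n) : Prop :=
  ¬ ∃ a b c : ℤ, a < b ∧ b < c ∧ t.rel c a ∧ t.rel a b

/-- A TITO is 132-avoiding if there are no integers `a < b < c` with `a ≼ c` and `c ≼ b`. -/
def Avoids132 (t : TITO n) : Prop :=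
  ¬ ∃ a b c : ℤ, a < b ∧ b < c ∧ t.rel a c ∧ t.rel c b

/-- A set is order-convex for a TITO. -/
def OrderConvex (t : TITO n) (S : Set ℤ) : Prop :=
  ∀ x ∈ S, ∀ z ∈ S, ∀ y : ℤ, t.rel x y → t.rel y z → y ∈ S

/-- A block of a TITO: an order-convex set with no minimal and no maximal element in which
all intervals are finite. -/
def IsBlock (t : TITO n) (I : Set ℤ) : Prop :=
  t.OrderConvex I ∧
  (∀ a ∈ I, ∃ b ∈ I, b ≠ a ∧ t.rel b a) ∧
  (∀ a ∈ I, ∃ b ∈ I, b ≠ a ∧ t.rel a b) ∧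
  (∀ a ∈ I, ∀ c ∈ I, t.rel a c → {b : ℤ | t.rel a b ∧ t.rel b c}.Finite)

/-- A block is waxing if `a ≼ a + n` for every `a` in it. -/
def Waxing (t : TITO n) (I : Set ℤ) : Prop := ∀ a ∈ I, t.rel a (a + n)

/-- A block is waning if `a + n ≼ a` for every `a` in it. -/
def Waning (t : TITO n) (I : Set ℤ) : Prop := ∀ a ∈ I, t.rel (a + n) a

/-- A TITO is real if `a ≼ a + n` whenever the residue class of `a` mod `n` is order-convex. -/
def IsReal (t : TITO n) : Prop :=
  ∀ a : ℤ, t.OrderConvex {x : ℤ | ∃ k : ℤ, x = a + k * n} → t.rel a (a + n)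

/-- A TITO is co-real if `a + n ≼ a` whenever the residue class of `a` mod `n` is order-convex. -/
def IsCoReal (t : TITO n) : Prop :=
  ∀ a : ℤ, t.OrderConvex {x : ℤ | ∃ k : ℤ, x = a + k * n} → t.rel (a + n) a

/-- `(a, b)` with `a < b` is a lower wall if `b ≼ a` is a cover relation of the total order. -/
def LowerWall (t : TITO n) (a b : ℤ) : Prop :=
  a < b ∧ t.rel b a ∧ ∀ z : ℤ, z ≠ a → z ≠ b → ¬ (t.rel b z ∧ t.rel z a)

end TITO

namespace TITOAux

variable {n : ℕ}

/-- `a` is waning: `a + n ≼ a`. -/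
def Wan (t : TITO n) (a : ℤ) : Prop := t.rel (a + n) a

lemma rel_shift (t : TITO n) (k : ℤ) (a b : ℤ) :
    t.rel a b ↔ t.rel (a + k * n) (b + k * n) := by
  induction k using Int.induction_on with
  | zero => simp
  | succ k ih =>
      rw [show a + ((k:ℤ) + 1) * n = a + (k:ℤ) * n + n by ring,
        show b + ((k:ℤ) + 1) * n = b + (k:ℤ) * n + n by ring, ← t.invariant]
      exact ih
  | pred k ih =>
      rw [show a + (-(k:ℤ) - 1) * n = a + (-(k:ℤ) - 1) * n by ring] at *
      rw [show a + (-(k:ℤ)) * n = (a + (-(k:ℤ) - 1) * n) + n by ring,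
        show b + (-(k:ℤ)) * n = (b + (-(k:ℤ) - 1) * n) + n by ring, ← t.invariant] at ih
      exact ih

lemma wan_shift (t : TITO n) (k : ℤ) (a : ℤ) : Wan t (a + k * n) ↔ Wan t a := by
  unfold Wan
  rw [show a + k * (n:ℤ) + n = (a + n) + k * n by ring]
  exact (rel_shift t k (a + n) a).symm

lemma wan_add (t : TITO n) (a : ℤ) : Wan t (a + n) ↔ Wan t a := by
  simpa using wan_shift t 1 a

lemma k1 (t : TITO n) (ht : t.Avoids312) {a b c : ℤ} (hab : a < b) (hbc : b ≤ c)
    (hca : t.rel c a) : t.rel b a := by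
  rcases eq_or_lt_of_le hbc with rfl | h2
  · exact hca
  · rcases t.total a b with h3 | h3
    · exact absurd ⟨a, b, c, hab, h2, hca, h3⟩ ht
    · exact h3

lemma wan_dom (t : TITO n) (hn : 0 < n) (ht : t.Avoids312) {a b : ℤ}
    (wa : Wan t a) (hab : a < b) : t.rel b a := by
  have key : ∀ k : ℕ, t.rel (a + n + k * n) a := by
    intro k
    induction k with
    | zero => simpa [Wan] using wa
    | succ k ih =>
        have wu : Wan t (a + n + k * n) := (wan_shift t k (a + n)).mpr ((wan_add t a).mpr wa)
        have e : (((k + 1 : ℕ)) : ℤ) * n = (k : ℤ) * n + n := by push_cast; ring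
        rw [e, ← add_assoc]
        exact t.trans _ _ _ wu ih
  set k := (b - a - 1).toNat with hkdef
  have hk : (b - a - 1 : ℤ) ≤ (k : ℤ) := Int.self_le_toNat _
  have h1 : (k : ℤ) ≤ (k : ℤ) * n := le_mul_of_one_le_right (Int.ofNat_nonneg _)
    (by exact_mod_cast hn)
  have h2 : (1 : ℤ) ≤ n := by exact_mod_cast hn
  exact k1 t ht hab (by omega) (key k)

lemma wan_down (t : TITO n) (hn : 0 < n) (ht : t.Avoids312) {u y : ℤ}
    (wu : Wan t u) (hyu : y < u) (huy : t.rel u y) : Wan t y := by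
  have h2 : (1 : ℤ) ≤ n := by exact_mod_cast hn
  by_cases h : y + n ≤ u
  · exact k1 t ht (by omega) h huy
  · exact t.trans _ _ _ (wan_dom t hn ht wu (by omega)) huy

lemma not_wan_bound (t : TITO n) (hn : 0 < n) (ht : t.Avoids312) {a b : ℤ}
    (wa : ¬ TITOAux.Wan t a) (hab : a < b) (hba : t.rel b a) : b < a + n := by
  have h2 : (1 : ℤ) ≤ n := by exact_mod_cast hn
  by_contra h
  exact wa (k1 t ht (by omega) (by omega) hba)

end TITOAux

namespace TITOAux

variable {n : ℕ}

/-- The modified relation: like `t`, but each waning residue class is "cut" so that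
`a` only dominates `(a, a+n)`. Only a valid order when all waning elements are congruent. -/
def mu0rel (t : TITO n) (a b : ℤ) : Prop :=
  a = b ∨ (a < b ∧ ((Wan t a ∧ a + n ≤ b) ∨ (¬ Wan t a ∧ t.rel a b)))
    ∨ (b < a ∧ ((Wan t b ∧ a < b + n) ∨ (¬ Wan t b ∧ t.rel a b)))

lemma two_wan (t : TITO n) (hn : 0 < n)
    (hSW : ∀ x y, Wan t x → Wan t y → (n : ℤ) ∣ x - y) {x y : ℤ}
    (wx : Wan t x) (wy : Wan t y) (hxy : x < y) : x + n ≤ y := by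
  have hd := hSW y x wy wx
  have := Int.le_of_dvd (by omega) hd
  omega

lemma mu0_total (t : TITO n) (a b : ℤ) : mu0rel t a b ∨ mu0rel t b a := by
  rcases lt_trichotomy a b with h | rfl | h
  · by_cases wa : Wan t a
    · by_cases hb : a + n ≤ b
      · exact Or.inl (Or.inr (Or.inl ⟨h, Or.inl ⟨wa, hb⟩⟩))
      · exact Or.inr (Or.inr (Or.inr ⟨h, Or.inl ⟨wa, by omega⟩⟩))
    · rcases t.total a b with h2 | h2
      · exact Or.inl (Or.inr (Or.inl ⟨h, Or.inr ⟨wa, h2⟩⟩))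
      · exact Or.inr (Or.inr (Or.inr ⟨h, Or.inr ⟨wa, h2⟩⟩))
  · exact Or.inl (Or.inl rfl)
  · by_cases wb : Wan t b
    · by_cases hb : b + n ≤ a
      · exact Or.inr (Or.inr (Or.inl ⟨h, Or.inl ⟨wb, hb⟩⟩))
      · exact Or.inl (Or.inr (Or.inr ⟨h, Or.inl ⟨wb, by omega⟩⟩))
    · rcases t.total b a with h2 | h2
      · exact Or.inr (Or.inr (Or.inl ⟨h, Or.inr ⟨wb, h2⟩⟩))
      · exact Or.inl (Or.inr (Or.inr ⟨h, Or.inr ⟨wb, h2⟩⟩))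

lemma mu0_antisymm (t : TITO n) (a b : ℤ) (h1 : mu0rel t a b) (h2 : mu0rel t b a) : a = b := by
  rcases h1 with rfl | ⟨hab, hA⟩ | ⟨hba, hB⟩
  · rfl
  · rcases h2 with rfl | ⟨h', _⟩ | ⟨h', hB⟩
    · rfl
    · omega
    · rcases hA with ⟨wa, h3⟩ | ⟨wa, h3⟩ <;> rcases hB with ⟨wa', h4⟩ | ⟨wa', h4⟩
      · omega
      · exact absurd wa wa'
      · exact absurd wa' wa
      · exact absurd (t.antisymm a b h3 h4) (by omega)
  · rcases h2 with rfl | ⟨h', hA⟩ | ⟨h', _⟩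
    · rfl
    · rcases hA with ⟨wb, h3⟩ | ⟨wb, h3⟩ <;> rcases hB with ⟨wb', h4⟩ | ⟨wb', h4⟩
      · omega
      · exact absurd wb wb'
      · exact absurd wb' wb
      · exact absurd (t.antisymm a b h4 h3) (by omega)
    · omega

lemma mu0_invariant (t : TITO n) (a b : ℤ) : mu0rel t a b ↔ mu0rel t (a + n) (b + n) := by
  unfold mu0rel
  rw [wan_add t a, wan_add t b, ← t.invariant]
  constructor
  · rintro (rfl | ⟨h1, h2⟩ | ⟨h1, h2⟩)
    · exact Or.inl rfl
    · refine Or.inr (Or.inl ⟨by omega, ?_⟩)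
      rcases h2 with ⟨w, h⟩ | h
      · exact Or.inl ⟨w, by omega⟩
      · exact Or.inr h
    · refine Or.inr (Or.inr ⟨by omega, ?_⟩)
      rcases h2 with ⟨w, h⟩ | h
      · exact Or.inl ⟨w, by omega⟩
      · exact Or.inr h
  · rintro (h | ⟨h1, h2⟩ | ⟨h1, h2⟩)
    · exact Or.inl (by omega)
    · refine Or.inr (Or.inl ⟨by omega, ?_⟩)
      rcases h2 with ⟨w, h⟩ | h
      · exact Or.inl ⟨w, by omega⟩
      · exact Or.inr h
    · refine Or.inr (Or.inr ⟨by omega, ?_⟩)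
      rcases h2 with ⟨w, h⟩ | h
      · exact Or.inl ⟨w, by omega⟩
      · exact Or.inr h

lemma mu0_trans (t : TITO n) (hn : 0 < n) (ht : t.Avoids312)
    (hSW : ∀ x y, Wan t x → Wan t y → (n : ℤ) ∣ x - y) (a b c : ℤ)
    (h1 : mu0rel t a b) (h2 : mu0rel t b c) : mu0rel t a c := by
  rcases h1 with rfl | h1
  · exact h2
  rcases h2 with rfl | h2
  · exact Or.inr h1
  rcases eq_or_ne a c with rfl | hac
  · exact Or.inl rfl
  have hn1 : (1 : ℤ) ≤ n := by exact_mod_cast hn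
  rcases h1 with ⟨hab, hA⟩ | ⟨hba, hB1⟩
  · rcases h2 with ⟨hbc, hA2⟩ | ⟨hcb, hB2⟩
    -- Combo 1 : a < b < c
    · refine Or.inr (Or.inl ⟨by omega, ?_⟩)
      by_cases wa : Wan t a
      · rcases hA with ⟨_, hb⟩ | ⟨wa', _⟩
        · exact Or.inl ⟨wa, by omega⟩
        · exact absurd wa wa'
      · rcases hA with ⟨wa', _⟩ | ⟨_, hrab⟩
        · exact absurd wa' wa
        · refine Or.inr ⟨wa, ?_⟩
          by_contra hne
          have hca : t.rel c a := (t.total a c).resolve_left hne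
          exact absurd (t.antisymm a b hrab (k1 t ht hab (by omega) hca)) (by omega)
    -- Combo 2 : a < b, c < b
    · rcases lt_trichotomy a c with h | rfl | h
      · -- 2a : a < c < b, prove A a c
        refine Or.inr (Or.inl ⟨h, ?_⟩)
        by_cases wa : Wan t a
        · rcases hA with ⟨_, hb⟩ | ⟨wa', _⟩
          · refine Or.inl ⟨wa, ?_⟩
            rcases hB2 with ⟨wc, _⟩ | ⟨wc, hrbc⟩
            · exact two_wan t hn hSW wa wc h
            · by_contra hlt
              have h3 : t.rel (a + n) c := k1 t ht (by omega) (by omega) hrbc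
              exact wc (wan_down t hn ht ((wan_add t a).mpr wa) (by omega) h3)
          · exact absurd wa wa'
        · rcases hA with ⟨wa', _⟩ | ⟨_, hrab⟩
          · exact absurd wa' wa
          · refine Or.inr ⟨wa, ?_⟩
            have hrbc : t.rel b c := by
              rcases hB2 with ⟨wc, _⟩ | ⟨_, h4⟩
              · exact wan_dom t hn ht wc hcb
              · exact h4
            exact t.trans _ _ _ hrab hrbc
      · exact Or.inl rfl
      · -- 2b : c < a < b, prove B c a
        refine Or.inr (Or.inr ⟨h, ?_⟩)
        by_cases wc : Wan t c
        · rcases hB2 with ⟨_, hb⟩ | ⟨wc', _⟩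
          · exact Or.inl ⟨wc, by omega⟩
          · exact absurd wc wc'
        · rcases hB2 with ⟨wc', _⟩ | ⟨_, hrbc⟩
          · exact absurd wc' wc
          · refine Or.inr ⟨wc, ?_⟩
            rcases hA with ⟨_, hb⟩ | ⟨_, hrab⟩
            · exact k1 t ht h (by omega) hrbc
            · exact t.trans _ _ _ hrab hrbc
  · rcases h2 with ⟨hbc, hA2⟩ | ⟨hcb, hB2⟩
    -- Combo 3 : b < a, b < c
    · rcases lt_trichotomy a c with h | rfl | h
      · -- 3a : prove A a c
        refine Or.inr (Or.inl ⟨h, ?_⟩)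
        by_cases wb : Wan t b
        · rcases hB1 with ⟨_, hb1⟩ | ⟨wb', _⟩
          · rcases hA2 with ⟨_, hb2⟩ | ⟨wb', _⟩
            · by_cases wa : Wan t a
              · exact absurd (two_wan t hn hSW wb wa hba) (by omega)
              · refine Or.inr ⟨wa, ?_⟩
                by_contra hne
                have hca : t.rel c a := (t.total a c).resolve_left hne
                have h3 : t.rel (b + n) a := k1 t ht (by omega) (by omega) hca
                exact wa (wan_down t hn ht ((wan_add t b).mpr wb) (by omega) h3)
            · exact absurd wb wb'
          · exact absurd wb wb'
        · rcases hB1 with ⟨wb', _⟩ | ⟨_, hrab⟩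
          · exact absurd wb' wb
          rcases hA2 with ⟨wb', _⟩ | ⟨_, hrbc⟩
          · exact absurd wb' wb
          by_cases wa : Wan t a
          · exact absurd (wan_down t hn ht wa hba hrab) wb
          · exact Or.inr ⟨wa, t.trans _ _ _ hrab hrbc⟩
      · exact Or.inl rfl
      · -- 3b : b < c < a, prove B c a
        refine Or.inr (Or.inr ⟨h, ?_⟩)
        by_cases wb : Wan t b
        · rcases hB1 with ⟨_, hb1⟩ | ⟨wb', _⟩
          · rcases hA2 with ⟨_, hb2⟩ | ⟨wb', _⟩
            · omega
            · exact absurd wb wb'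
          · exact absurd wb wb'
        · rcases hB1 with ⟨wb', _⟩ | ⟨_, hrab⟩
          · exact absurd wb' wb
          rcases hA2 with ⟨wb', _⟩ | ⟨_, hrbc⟩
          · exact absurd wb' wb
          by_cases wc : Wan t c
          · refine Or.inl ⟨wc, ?_⟩
            by_contra hge
            have h3 : t.rel (c + n) b := k1 t ht (by omega) (by omega) hrab
            exact wb (wan_down t hn ht ((wan_add t c).mpr wc) (by omega) h3)
          · exact Or.inr ⟨wc, t.trans _ _ _ hrab hrbc⟩
    -- Combo 4 : c < b < a, prove B c a
    · refine Or.inr (Or.inr ⟨by omega, ?_⟩)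
      by_cases wc : Wan t c
      · rcases hB2 with ⟨_, hb2⟩ | ⟨wc', _⟩
        · refine Or.inl ⟨wc, ?_⟩
          rcases hB1 with ⟨wb, _⟩ | ⟨wb', hrab⟩
          · exact absurd (two_wan t hn hSW wc wb hcb) (by omega)
          · by_contra hge
            have h3 : t.rel (c + n) b := k1 t ht (by omega) (by omega) hrab
            exact wb' (wan_down t hn ht ((wan_add t c).mpr wc) (by omega) h3)
        · exact absurd wc wc'
      · rcases hB2 with ⟨wc', _⟩ | ⟨_, hrbc⟩
        · exact absurd wc' wc
        refine Or.inr ⟨wc, ?_⟩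
        rcases hB1 with ⟨wb, _⟩ | ⟨_, hrab⟩
        · exact absurd (wan_down t hn ht wb hcb hrbc) wc
        · exact t.trans _ _ _ hrab hrbc

end TITOAux

namespace TITOAux

variable {n : ℕ}

/-- The modified TITO in the single-waning-class case. -/
def mu0 (t : TITO n) (hn : 0 < n) (ht : t.Avoids312)
    (hSW : ∀ x y, Wan t x → Wan t y → (n : ℤ) ∣ x - y) : TITO n where
  rel := mu0rel t
  refl := fun a => Or.inl rfl
  antisymm := mu0_antisymm t
  trans := mu0_trans t hn ht hSW
  total := mu0_total t
  invariant := mu0_invariant t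

lemma mu0_avoids (t : TITO n) (hn : 0 < n) (ht : t.Avoids312)
    (hSW : ∀ x y, Wan t x → Wan t y → (n : ℤ) ∣ x - y) :
    (mu0 t hn ht hSW).Avoids312 := by
  rintro ⟨a, b, c, hab, hbc, hca, hab2⟩
  rcases hca with h | ⟨h, _⟩ | ⟨_, hB⟩
  · omega
  · omega
  rcases hab2 with h | ⟨_, hA⟩ | ⟨h, _⟩
  · omega
  swap
  · omega
  rcases hB with ⟨wa, hb⟩ | ⟨wa, hrca⟩ <;> rcases hA with ⟨wa', hb'⟩ | ⟨wa', hrab⟩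
  · omega
  · exact wa' wa
  · exact wa wa'
  · exact absurd (t.antisymm a b hrab (k1 t ht hab (by omega) hrca)) (by omega)

lemma mu0_real (t : TITO n) (hn : 0 < n) (ht : t.Avoids312)
    (hSW : ∀ x y, Wan t x → Wan t y → (n : ℤ) ∣ x - y) :
    (mu0 t hn ht hSW).IsReal := by
  intro a _
  have h1 : (1 : ℤ) ≤ n := by exact_mod_cast hn
  by_cases wa : Wan t a
  · exact Or.inr (Or.inl ⟨by omega, Or.inl ⟨wa, by omega⟩⟩)
  · refine Or.inr (Or.inl ⟨by omega, Or.inr ⟨wa, ?_⟩⟩)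
    exact (t.total a (a + n)).resolve_right (fun h => wa h)

lemma mu0_le (t : TITO n) (hn : 0 < n) (ht : t.Avoids312)
    (hSW : ∀ x y, Wan t x → Wan t y → (n : ℤ) ∣ x - y) :
    (mu0 t hn ht hSW).Inversions ⊆ t.Inversions := by
  rintro ⟨a, b⟩ ⟨h1, h2⟩
  simp only [TITO.Inversions, Set.mem_setOf_eq] at *
  refine ⟨h1, ?_⟩
  rcases h2 with h | ⟨h, _⟩ | ⟨_, hB⟩
  · omega
  · omega
  rcases hB with ⟨wa, _⟩ | ⟨_, hr⟩
  · exact wan_dom t hn ht wa h1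
  · exact hr

lemma no_wan_of_real (μ : TITO n) (hn : 0 < n) (hμ : μ.Avoids312) (hre : μ.IsReal)
    {a : ℤ} (wa : Wan μ a) (hcl : ∀ y, Wan μ y → ∃ k : ℤ, y = a + k * n) : False := by
  -- the residue class of a is order-convex for μ
  have hconv : μ.OrderConvex {x : ℤ | ∃ k : ℤ, x = a + k * n} := by
    rintro x ⟨j, rfl⟩ z hz y hxy hyz
    have wx : Wan μ (a + j * n) := (wan_shift μ j a).mpr wa
    rcases lt_trichotomy y (a + j * n) with h | h | h
    · exact hcl y (wan_down μ hn hμ wx h hxy)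
    · exact h ▸ ⟨j, rfl⟩
    · have := μ.antisymm _ _ hxy (wan_dom μ hn hμ wx h)
      exact ⟨j, this ▸ rfl⟩
  have h2 := hre a hconv
  have := μ.antisymm _ _ h2 wa
  have h1 : (1 : ℤ) ≤ n := by exact_mod_cast hn
  omega

lemma mu0_max (t : TITO n) (hn : 0 < n) (ht : t.Avoids312)
    (hSW : ∀ x y, Wan t x → Wan t y → (n : ℤ) ∣ x - y)
    (μ : TITO n) (hμ : μ.Avoids312) (hre : μ.IsReal) (hinc : μ.Inversions ⊆ t.Inversions) :
    μ.Inversions ⊆ (mu0 t hn ht hSW).Inversions := by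
  rintro ⟨a, b⟩ ⟨h1, h2⟩
  simp only [TITO.Inversions, Set.mem_setOf_eq] at *
  refine ⟨h1, Or.inr (Or.inr ⟨h1, ?_⟩)⟩
  by_cases wa : Wan t a
  · refine Or.inl ⟨wa, ?_⟩
    by_contra hge
    -- then a + n ≤ b, so a is μ-waning, contradicting reality of μ
    have wμa : Wan μ a := k1 μ hμ (by omega) (by omega) h2
    refine no_wan_of_real μ hn hμ hre wμa ?_
    intro y wy
    have hmem : ((y, y + (n : ℤ)) : ℤ × ℤ) ∈ μ.Inversions :=
      ⟨show y < y + (n : ℤ) by omega, wy⟩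
    have hyt : Wan t y := (hinc hmem).2
    obtain ⟨k, hk⟩ := hSW y a hyt wa
    exact ⟨k, by linear_combination hk⟩
  · have hmem : ((a, b) : ℤ × ℤ) ∈ μ.Inversions := ⟨h1, h2⟩
    exact Or.inr ⟨wa, (hinc hmem).2⟩

end TITOAux

theorem stmt8 (n : ℕ) (hn : 2 ≤ n) (t : TITO n) (ht : t.Avoids312) :
    ∃ μ₀ : TITO n, μ₀.Avoids312 ∧ μ₀.IsReal ∧ μ₀.Inversions ⊆ t.Inversions ∧
      ∀ μ : TITO n, μ.Avoids312 → μ.IsReal → μ.Inversions ⊆ t.Inversions →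
        μ.Inversions ⊆ μ₀.Inversions := by
  open TITOAux in
  have hn0 : 0 < n := by omega
  have h1 : (1 : ℤ) ≤ n := by exact_mod_cast hn0
  have h2 : (2 : ℤ) ≤ n := by exact_mod_cast hn
  by_cases hSW : ∀ x y, Wan t x → Wan t y → (n : ℤ) ∣ x - y
  · exact ⟨mu0 t hn0 ht hSW, mu0_avoids t hn0 ht hSW, mu0_real t hn0 ht hSW,
      mu0_le t hn0 ht hSW, mu0_max t hn0 ht hSW⟩
  · -- at least two waning classes: t itself is real
    refine ⟨t, ht, ?_, fun p hp => hp, fun μ _ _ h => h⟩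
    intro a hconv
    by_cases wa : Wan t a
    · -- find a waning element in another class
      exfalso
      push_neg at hSW
      obtain ⟨x, y, wx, wy, hxy⟩ := hSW
      have hc : ∃ c, Wan t c ∧ ¬ (n : ℤ) ∣ c - a := by
        by_cases hx : (n : ℤ) ∣ x - a
        · by_cases hy : (n : ℤ) ∣ y - a
          · exfalso
            apply hxy
            rw [show x - y = (x - a) - (y - a) by ring]
            exact dvd_sub hx hy
          · exact ⟨y, wy, hy⟩
        · exact ⟨x, wx, hx⟩
      obtain ⟨c, wc, hc⟩ := hc
      -- the element of c's class in (a, a+n)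
      set r := (c - a) % (n : ℤ) with hr
      have hr0 : 0 < r := by
        rcases lt_or_eq_of_le (Int.emod_nonneg (c - a) (by omega : (n : ℤ) ≠ 0)) with h | h
        · exact h
        · exact absurd (Int.dvd_of_emod_eq_zero h.symm) hc
      have hrn : r < (n : ℤ) := Int.emod_lt_of_pos _ (by omega)
      set y0 := a + r with hy0
      have wy0 : Wan t y0 := by
        have hed := Int.emod_add_mul_ediv (c - a) (n : ℤ)
        have he : y0 = c + (-((c - a) / (n : ℤ))) * n := by
          rw [hy0, hr]; linear_combination hed
        rw [he]
        exact (wan_shift t _ c).mpr wc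
      have hin : y0 ∈ {x : ℤ | ∃ k : ℤ, x = a + k * n} := by
        refine hconv (a + n) ⟨1, by ring⟩ a ⟨0, by ring⟩ y0 ?_ ?_
        · exact wan_dom t hn0 ht wy0 (by omega)
        · exact wan_dom t hn0 ht wa (by omega)
      obtain ⟨k, hk⟩ := hin
      have hdr : (n : ℤ) ∣ r := ⟨k, by rw [hy0] at hk; linear_combination hk⟩
      have := Int.le_of_dvd hr0 hdr
      omega
    · exact (t.total a (a + n)).resolve_right (fun h => wa h)
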